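/- arXiv:1306.1510 — 3 statements merged into one kernel-verified Lean document; each statement's English description precedes it below -/
import Mathlib

section
/- If a Radon kernel π from point configurations to measures on X satisfies π(μ+δ_y, ·) = f(x,y)·π(μ, ·) on {y}^c for a measurable nonnegative function f (condition A2'), then the cocycle condition π(μ+δ_y, dx)π(μ, dy) = π(μ+δ_x, dy)π(μ, dx) holds for all μ if and only if f is symmetric (f(x,y)=f(y,x)) almost surely with respect to π(μ,·)⊗π(μ,·) off the diagonal. -/
open MeasureTheory ENNReal Bornology

variable {X : Type*} [MetricSpace X] [MeasurableSpace X] [BorelSpace X]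

/-- A locally finite point measure: integer-valued (possibly infinite) on Borel sets,
finite on bounded Borel sets. -/
def IsPointMeasure (μ : Measure X) : Prop :=
  (∀ B : Set X, MeasurableSet B → μ B = ∞ ∨ ∃ n : ℕ, μ B = n) ∧
  (∀ B : Set X, MeasurableSet B → IsBounded B → μ B ≠ ∞)

/-- A Radon kernel from point configurations to measures: measurable in the configuration,
and each value is a Radon (locally finite) measure. -/
def IsRadonKernel (π : Measure X → Measure X) : Prop :=
  Measurable π ∧ ∀ μ : Measure X, ∀ B : Set X, MeasurableSet B → IsBounded B → π μ B ≠ ∞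

/-- The cocycle condition (A1): π(μ+δ_y, dx)π(μ, dy) = π(μ+δ_x, dy)π(μ, dx). -/
def Cocycle (π : Measure X → Measure X) : Prop :=
  ∀ μ : Measure X, IsPointMeasure μ →
    ∀ g : X → X → ℝ≥0∞, Measurable (Function.uncurry g) →
      ∫⁻ y, (∫⁻ x, g x y ∂ π (μ + Measure.dirac y)) ∂ π μ
        = ∫⁻ x, (∫⁻ y, g x y ∂ π (μ + Measure.dirac x)) ∂ π μ

/-- Condition (A2'): π(μ+δ_y, dx) = f(x,y) π(μ, dx) on {y}ᶜ. -/
def CondA2' (π : Measure X → Measure X) (f : X → X → ℝ≥0∞) : Prop :=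
  ∀ (y : X) (μ : Measure X), IsPointMeasure μ →
    (π (μ + Measure.dirac y)).restrict {y}ᶜ
      = ((π μ).withDensity (fun x => f x y)).restrict {y}ᶜ

/-- Any measure on a metric space that is finite on bounded measurable sets is σ-finite. -/
lemma sigmaFinite_of_finite_on_bounded (m : Measure X)
    (h : ∀ B : Set X, MeasurableSet B → IsBounded B → m B ≠ ∞) : SigmaFinite m := by
  rcases isEmpty_or_nonempty X with hX | hX
  · have : IsFiniteMeasure m := ⟨by rw [Set.univ_eq_empty_iff.mpr hX]; simp⟩
    infer_instance
  · obtain ⟨x₀⟩ := hX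
    exact ⟨⟨{ set := fun n => Metric.ball x₀ n
              set_mem := fun _ => trivial
              finite := fun n =>
                lt_top_iff_ne_top.2 (h _ Metric.isOpen_ball.measurableSet Metric.isBounded_ball)
              spanning := Metric.iUnion_ball_nat x₀ }⟩⟩

/-- A σ-finite measure on a space with measurable singletons has countably many atoms. -/
lemma countable_atoms (ν : Measure X) [SigmaFinite ν] : {a : X | ν {a} ≠ 0}.Countable := by
  have h := Measure.countable_meas_level_set_pos (μ := ν) (g := (id : X → X)) measurable_id
  refine h.mono fun a ha => ?_
  have : {b : X | id b = a} = {a} := by ext b; simp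
  simp only [Set.mem_setOf_eq, this]
  simpa [pos_iff_ne_zero] using ha

/-- Splitting of the inner integral using (A2'). -/
lemma inner_split {π : Measure X → Measure X} {f : X → X → ℝ≥0∞}
    (hf : Measurable (Function.uncurry f)) (hA2' : CondA2' π f)
    {μ : Measure X} (hμ : IsPointMeasure μ) (y : X) {h : X → ℝ≥0∞} (hh : Measurable h) :
    ∫⁻ t, h t ∂ π (μ + Measure.dirac y)
      = (∫⁻ t in {y}ᶜ, f t y * h t ∂ π μ)
        + ∫⁻ t in {y}, h t ∂ π (μ + Measure.dirac y) := by
  rw [← lintegral_add_compl h (measurableSet_singleton y), add_comm]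
  congr 1
  rw [hA2' y μ hμ, restrict_withDensity (measurableSet_singleton y).compl,
    lintegral_withDensity_eq_lintegral_mul _ hf.of_uncurry_right hh]
  rfl

/-- Replace a set-lintegral over a punctured space by an integral against an indicator of the
complement of the (countable, measurable) "diagonal atoms" set. -/
lemma punctured_to_indicator (ν : Measure X) (F : X × X → ℝ≥0∞) (y : X) :
    ∫⁻ t in {y}ᶜ, F (t, y) ∂ν
      = ∫⁻ t, ({p : X × X | p.1 = p.2 ∧ ν {p.1} ≠ 0}ᶜ).indicator F (t, y) ∂ν := by
  classical
  set N : Set (X × X) := {p : X × X | p.1 = p.2 ∧ ν {p.1} ≠ 0} with hNdef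
  by_cases hy : ν {y} = 0
  · have h1 : ∀ t : X, (Nᶜ).indicator F (t, y) = F (t, y) := by
      intro t
      rw [Set.indicator_apply, if_pos]
      rw [Set.mem_compl_iff]
      rintro ⟨h1, h2⟩
      simp only at h1
      exact h2 (by rw [show t = y from h1]; exact hy)
    simp_rw [h1]
    conv_rhs => rw [← lintegral_add_compl (fun t => F (t, y)) (measurableSet_singleton y)]
    rw [setLIntegral_measure_zero _ _ hy, zero_add]
  · have h1 : ∀ t : X, (Nᶜ).indicator F (t, y) = (({y} : Set X)ᶜ).indicator (fun t => F (t, y)) t := by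
      intro t
      rw [Set.indicator_apply, Set.indicator_apply]
      by_cases ht : t = y
      · rw [if_neg, if_neg]
        · simp [ht]
        · simp only [Set.mem_compl_iff, not_not]
          exact ⟨ht, by simp only; rw [ht]; exact hy⟩
      · rw [if_pos, if_pos]
        · exact Set.mem_compl ht
        · simp only [Set.mem_compl_iff, hNdef, Set.mem_setOf_eq]
          rintro ⟨h1, -⟩
          exact ht h1
    simp_rw [h1]
    rw [lintegral_indicator (measurableSet_singleton y).compl]

/-- under (A2'), the cocycle condition (A1) holds iff f is symmetric
π(μ,·)⊗π(μ,·)-a.s. off the diagonal. -/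
theorem cocycle_iff_symm_density
    (π : Measure X → Measure X) (hπ : IsRadonKernel π)
    (f : X → X → ℝ≥0∞) (hf : Measurable (Function.uncurry f))
    (hA2' : CondA2' π f) :
    Cocycle π ↔
      ∀ μ : Measure X, IsPointMeasure μ →
        ∀ᵐ p : X × X ∂ ((π μ).prod (π μ)), p.1 ≠ p.2 → f p.1 p.2 = f p.2 p.1 := by
  have hm1 : Measurable fun p : X × X => f p.1 p.2 := hf
  have hm2 : Measurable fun p : X × X => f p.2 p.1 := hf.comp measurable_swap
  constructor
  · -- Cocycle → a.e. symmetry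
    intro hC μ hμ
    haveI : SigmaFinite (π μ) := sigmaFinite_of_finite_on_bounded _ (hπ.2 μ)
    set ν := π μ with hνdef
    rw [ae_iff]
    refine measure_mono_null (fun p hp => (_root_.not_imp.mp hp).2)
      (?_ : (ν.prod ν) {p : X × X | f p.1 p.2 ≠ f p.2 p.1} = 0)
    rcases isEmpty_or_nonempty X with hX | hX
    · exact measure_mono_null (fun p _ => (hX.false p.1).elim) measure_empty
    obtain ⟨x₀⟩ := hX
    set S : ℕ → Set (X × X) := fun m =>
      {p : X × X | f p.2 p.1 + ((m : ℝ≥0∞) + 1)⁻¹ ≤ f p.1 p.2 ∧ f p.2 p.1 ≤ m}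
        ∩ (Metric.ball x₀ (m + 1) ×ˢ Metric.ball x₀ (m + 1)) with hSdef
    have hS : ∀ m, MeasurableSet (S m) := by
      intro m
      exact ((measurableSet_le (hm2.add measurable_const) hm1).inter
          (measurableSet_le hm2 measurable_const)).inter
        (Metric.isOpen_ball.measurableSet.prod Metric.isOpen_ball.measurableSet)
    -- each S m has measure zero
    have hS0 : ∀ m, (ν.prod ν) (S m) = 0 := by
      intro m
      set g : X → X → ℝ≥0∞ := fun x y => (S m).indicator (fun _ => (1 : ℝ≥0∞)) (x, y) with hgdef
      have hg : Measurable (Function.uncurry g) := measurable_const.indicator (hS m)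
      have hgdiag : ∀ x : X, g x x = 0 := by
        intro x
        refine Set.indicator_of_notMem ?_ _
        rintro ⟨⟨h1, h2⟩, -⟩
        have hne : f x x ≠ ∞ := by
          refine ne_top_of_le_ne_top ?_ h2
          exact (ENNReal.natCast_ne_top m)
        have := (ENNReal.add_le_add_iff_left hne).mp
          (by simpa using h1 : f x x + ((m : ℝ≥0∞) + 1)⁻¹ ≤ f x x + 0)
        simp only [nonpos_iff_eq_zero, ENNReal.inv_eq_zero] at this
        exact (ENNReal.add_ne_top.mpr ⟨ENNReal.natCast_ne_top m, one_ne_top⟩) this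
      have E := hC μ hμ g hg
      -- compute both sides as integrals over the product
      have full_left : ∀ y : X, (∫⁻ x, g x y ∂ π (μ + Measure.dirac y))
          = ∫⁻ x, f x y * g x y ∂ν := by
        intro y
        rw [inner_split hf hA2' hμ y hg.of_uncurry_right]
        have e0 : ∫⁻ t in {y}, g t y ∂ π (μ + Measure.dirac y) = 0 := by
          have hcg : ∀ᵐ t ∂(π (μ + Measure.dirac y)), t ∈ ({y} : Set X) →
              g t y = (fun _ => (0 : ℝ≥0∞)) t := ae_of_all _ fun t ht => by
            rw [Set.mem_singleton_iff] at ht; rw [ht]; exact hgdiag y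
          rw [setLIntegral_congr_fun_ae (measurableSet_singleton y) hcg, lintegral_zero]
        rw [e0, add_zero]
        have e0' : ∫⁻ t in {y}, f t y * g t y ∂ν = 0 := by
          have hcg : ∀ᵐ t ∂ν, t ∈ ({y} : Set X) →
              f t y * g t y = (fun _ => (0 : ℝ≥0∞)) t := ae_of_all _ fun t ht => by
            rw [Set.mem_singleton_iff] at ht; rw [ht, hgdiag y, mul_zero]
          rw [setLIntegral_congr_fun_ae (measurableSet_singleton y) hcg, lintegral_zero]
        conv_rhs => rw [← lintegral_add_compl (fun x => f x y * g x y)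
          (measurableSet_singleton y)]
        rw [e0', zero_add]
      have full_right : ∀ x : X, (∫⁻ t, g x t ∂ π (μ + Measure.dirac x))
          = ∫⁻ t, f t x * g x t ∂ν := by
        intro x
        rw [inner_split hf hA2' hμ x hg.of_uncurry_left]
        have e0 : ∫⁻ t in {x}, g x t ∂ π (μ + Measure.dirac x) = 0 := by
          have hcg : ∀ᵐ t ∂(π (μ + Measure.dirac x)), t ∈ ({x} : Set X) →
              g x t = (fun _ => (0 : ℝ≥0∞)) t := ae_of_all _ fun t ht => by
            rw [Set.mem_singleton_iff] at ht; rw [ht]; exact hgdiag x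
          rw [setLIntegral_congr_fun_ae (measurableSet_singleton x) hcg, lintegral_zero]
        rw [e0, add_zero]
        have e0' : ∫⁻ t in {x}, f t x * g x t ∂ν = 0 := by
          have hcg : ∀ᵐ t ∂ν, t ∈ ({x} : Set X) →
              f t x * g x t = (fun _ => (0 : ℝ≥0∞)) t := ae_of_all _ fun t ht => by
            rw [Set.mem_singleton_iff] at ht; rw [ht, hgdiag x, mul_zero]
          rw [setLIntegral_congr_fun_ae (measurableSet_singleton x) hcg, lintegral_zero]
        conv_rhs => rw [← lintegral_add_compl (fun t => f t x * g x t)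
          (measurableSet_singleton x)]
        rw [e0', zero_add]
      have hK : Measurable fun p : X × X => f p.1 p.2 * g p.1 p.2 := hm1.mul hg
      have hK' : Measurable fun p : X × X => f p.2 p.1 * g p.1 p.2 := hm2.mul hg
      have EL : ∫⁻ y, (∫⁻ x, g x y ∂ π (μ + Measure.dirac y)) ∂ν
          = ∫⁻ p : X × X, f p.1 p.2 * g p.1 p.2 ∂(ν.prod ν) := by
        rw [lintegral_congr full_left, ← lintegral_prod_swap
          (fun p : X × X => f p.1 p.2 * g p.1 p.2),
          lintegral_prod (fun z : X × X => f z.swap.1 z.swap.2 * g z.swap.1 z.swap.2)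
            ((hK.comp measurable_swap).aemeasurable)]
        rfl
      have ER : ∫⁻ x, (∫⁻ t, g x t ∂ π (μ + Measure.dirac x)) ∂ν
          = ∫⁻ p : X × X, f p.2 p.1 * g p.1 p.2 ∂(ν.prod ν) := by
        rw [lintegral_congr full_right, lintegral_prod _ hK'.aemeasurable]
      rw [EL, ER] at E
      -- rewrite as set integrals over S m
      have ind1 : (fun p : X × X => f p.1 p.2 * g p.1 p.2)
          = (S m).indicator (fun p : X × X => f p.1 p.2) := by
        funext p
        by_cases hp : p ∈ S m
        · rw [Set.indicator_of_mem hp]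
          have : g p.1 p.2 = 1 := Set.indicator_of_mem hp _
          rw [this, mul_one]
        · rw [Set.indicator_of_notMem hp]
          have : g p.1 p.2 = 0 := Set.indicator_of_notMem hp _
          rw [this, mul_zero]
      have ind2 : (fun p : X × X => f p.2 p.1 * g p.1 p.2)
          = (S m).indicator (fun p : X × X => f p.2 p.1) := by
        funext p
        by_cases hp : p ∈ S m
        · rw [Set.indicator_of_mem hp]
          have : g p.1 p.2 = 1 := Set.indicator_of_mem hp _
          rw [this, mul_one]
        · rw [Set.indicator_of_notMem hp]
          have : g p.1 p.2 = 0 := Set.indicator_of_notMem hp _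
          rw [this, mul_zero]
      rw [ind1, ind2, lintegral_indicator (hS m), lintegral_indicator (hS m)] at E
      -- finiteness and the bound
      have hSfin : (ν.prod ν) (S m) ≠ ∞ := by
        refine ne_top_of_le_ne_top ?_ (measure_mono Set.inter_subset_right)
        rw [Measure.prod_prod]
        exact ENNReal.mul_ne_top
          (hπ.2 μ _ Metric.isOpen_ball.measurableSet Metric.isBounded_ball)
          (hπ.2 μ _ Metric.isOpen_ball.measurableSet Metric.isBounded_ball)
      have ha : ∫⁻ p in S m, f p.2 p.1 ∂(ν.prod ν) ≠ ∞ := by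
        refine ne_top_of_le_ne_top (ENNReal.mul_ne_top (ENNReal.natCast_ne_top m) hSfin) ?_
        calc ∫⁻ p in S m, f p.2 p.1 ∂(ν.prod ν) ≤ ∫⁻ _ in S m, (m : ℝ≥0∞) ∂(ν.prod ν) :=
              setLIntegral_mono measurable_const fun p hp => hp.1.2
          _ = (m : ℝ≥0∞) * (ν.prod ν) (S m) := setLIntegral_const _ _
      have key : (∫⁻ p in S m, f p.2 p.1 ∂(ν.prod ν)) + ((m : ℝ≥0∞) + 1)⁻¹ * (ν.prod ν) (S m)
          ≤ ∫⁻ p in S m, f p.2 p.1 ∂(ν.prod ν) := by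
        calc (∫⁻ p in S m, f p.2 p.1 ∂(ν.prod ν)) + ((m : ℝ≥0∞) + 1)⁻¹ * (ν.prod ν) (S m)
            = ∫⁻ p in S m, f p.2 p.1 + ((m : ℝ≥0∞) + 1)⁻¹ ∂(ν.prod ν) := by
              rw [lintegral_add_left hm2, setLIntegral_const]
          _ ≤ ∫⁻ p in S m, f p.1 p.2 ∂(ν.prod ν) :=
              setLIntegral_mono hm1 fun p hp => hp.1.1
          _ = ∫⁻ p in S m, f p.2 p.1 ∂(ν.prod ν) := E
      have : ((m : ℝ≥0∞) + 1)⁻¹ * (ν.prod ν) (S m) = 0 := by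
        have h0 : ((m : ℝ≥0∞) + 1)⁻¹ * (ν.prod ν) (S m) ≤ 0 := by
          have := (ENNReal.add_le_add_iff_left ha).mp
            (le_trans key (by rw [add_zero]))
          exact this
        exact nonpos_iff_eq_zero.mp h0
      rcases mul_eq_zero.mp this with h | h
      · exact absurd h (ENNReal.inv_ne_zero.mpr
          (ENNReal.add_ne_top.mpr ⟨ENNReal.natCast_ne_top m, one_ne_top⟩))
      · exact h
    -- the sets S m (and their swaps) cover the bad set
    have cover : {p : X × X | f p.1 p.2 ≠ f p.2 p.1}
        ⊆ (⋃ m, S m) ∪ Prod.swap ⁻¹' (⋃ m, S m) := by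
      have claim : ∀ q : X × X, f q.2 q.1 < f q.1 q.2 → q ∈ ⋃ m, S m := by
        intro q hlt
        obtain ⟨r, hr0, hradd⟩ := ENNReal.lt_iff_exists_add_pos_lt.mp hlt
        have hrne : (r : ℝ≥0∞) ≠ 0 := by exact_mod_cast hr0.ne'
        obtain ⟨n, hn⟩ := ENNReal.exists_inv_nat_lt hrne
        obtain ⟨m₁, hm₁⟩ := ENNReal.exists_nat_gt (ne_top_of_lt hlt)
        obtain ⟨m₂, hm₂⟩ := exists_nat_gt (dist q.1 x₀)
        obtain ⟨m₃, hm₃⟩ := exists_nat_gt (dist q.2 x₀)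
        set M := m₁ + n + m₂ + m₃ with hM
        refine Set.mem_iUnion.mpr ⟨M, ⟨?_, ?_⟩, ?_, ?_⟩
        · have h1 : ((M : ℝ≥0∞) + 1)⁻¹ ≤ (n : ℝ≥0∞)⁻¹ := by
            apply ENNReal.inv_le_inv'
            have hnM : (n : ℝ≥0∞) ≤ (M : ℝ≥0∞) := by exact_mod_cast (by omega : n ≤ M)
            exact hnM.trans le_self_add
          calc f q.2 q.1 + ((M : ℝ≥0∞) + 1)⁻¹ ≤ f q.2 q.1 + r :=
              add_le_add le_rfl (h1.trans hn.le)
            _ ≤ f q.1 q.2 := hradd.le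
        · calc f q.2 q.1 ≤ (m₁ : ℝ≥0∞) := hm₁.le
            _ ≤ (M : ℝ≥0∞) := by exact_mod_cast by omega
        · have : (m₂ : ℝ) ≤ M := by exact_mod_cast by omega
          exact Metric.mem_ball.mpr (by push_cast; linarith)
        · have : (m₃ : ℝ) ≤ M := by exact_mod_cast by omega
          exact Metric.mem_ball.mpr (by push_cast; linarith)
      intro p hp
      rcases lt_or_gt_of_ne (hp : f p.1 p.2 ≠ f p.2 p.1) with h | h
      · exact Or.inr (claim (p.2, p.1) h)
      · exact Or.inl (claim p h)
    have hU : (ν.prod ν) (⋃ m, S m) = 0 := measure_iUnion_null hS0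
    have hUswap : (ν.prod ν) (Prod.swap ⁻¹' (⋃ m, S m)) = 0 := by
      have hUm : MeasurableSet (⋃ m, S m) := MeasurableSet.iUnion hS
      rw [← Measure.map_apply measurable_swap hUm, Measure.prod_swap]
      exact hU
    refine measure_mono_null cover ?_
    refine le_antisymm ?_ zero_le
    calc (ν.prod ν) ((⋃ m, S m) ∪ Prod.swap ⁻¹' (⋃ m, S m))
        ≤ (ν.prod ν) (⋃ m, S m) + (ν.prod ν) (Prod.swap ⁻¹' (⋃ m, S m)) := measure_union_le _ _
      _ = 0 := by rw [hU, hUswap, add_zero]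
  · -- a.e. symmetry → Cocycle
    intro hsymm μ hμ g hg
    haveI : SigmaFinite (π μ) := sigmaFinite_of_finite_on_bounded _ (hπ.2 μ)
    set ν := π μ with hνdef
    set N : Set (X × X) := {p : X × X | p.1 = p.2 ∧ ν {p.1} ≠ 0} with hNdef
    have hNcnt : N.Countable := by
      refine Set.Countable.mono ?_ ((countable_atoms ν).image fun a => (a, a))
      rintro ⟨a, b⟩ ⟨h1, h2⟩
      exact ⟨a, h2, by simp only at h1; rw [h1]⟩
    have hN : MeasurableSet N := hNcnt.measurableSet
    set G : X × X → ℝ≥0∞ := Nᶜ.indicator (fun q => f q.1 q.2 * g q.1 q.2) with hGdef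
    set G' : X × X → ℝ≥0∞ := Nᶜ.indicator (fun q => f q.1 q.2 * g q.2 q.1) with hG'def
    have hGm : Measurable G := (hm1.mul hg).indicator hN.compl
    have hG'm : Measurable G' := (hm1.mul (hg.comp measurable_swap)).indicator hN.compl
    have hL : ∀ y : X, (∫⁻ x, g x y ∂ π (μ + Measure.dirac y))
        = (∫⁻ x, G (x, y) ∂ν) + ∫⁻ x in {y}, g x y ∂ π (μ + Measure.dirac y) := by
      intro y
      rw [inner_split hf hA2' hμ y hg.of_uncurry_right]
      congr 1
      exact punctured_to_indicator ν (fun q => f q.1 q.2 * g q.1 q.2) y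
    have hR : ∀ x : X, (∫⁻ t, g x t ∂ π (μ + Measure.dirac x))
        = (∫⁻ t, G' (t, x) ∂ν) + ∫⁻ t in {x}, g x t ∂ π (μ + Measure.dirac x) := by
      intro x
      rw [inner_split hf hA2' hμ x hg.of_uncurry_left]
      congr 1
      exact punctured_to_indicator ν (fun q => f q.1 q.2 * g q.2 q.1) x
    have hdd : ∀ t : X, (∫⁻ s in {t}, g s t ∂ π (μ + Measure.dirac t))
        = ∫⁻ s in {t}, g t s ∂ π (μ + Measure.dirac t) := by
      intro t
      refine setLIntegral_congr_fun_ae (measurableSet_singleton t) (ae_of_all _ fun s hs => ?_)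
      rw [Set.mem_singleton_iff] at hs; subst hs; rfl
    have e1 : ∫⁻ y, (∫⁻ x, G (x, y) ∂ν) ∂ν = ∫⁻ p, G p ∂(ν.prod ν) := by
      rw [← lintegral_prod_swap G, lintegral_prod (fun z : X × X => G z.swap)
        ((hGm.comp measurable_swap).aemeasurable)]
      rfl
    have e2 : ∫⁻ x, (∫⁻ t, G' (t, x) ∂ν) ∂ν = ∫⁻ p, G' p ∂(ν.prod ν) := by
      rw [← lintegral_prod_swap G', lintegral_prod (fun z : X × X => G' z.swap)
        ((hG'm.comp measurable_swap).aemeasurable)]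
      rfl
    have hae : ∀ᵐ p : X × X ∂(ν.prod ν), f p.1 p.2 = f p.2 p.1 := by
      filter_upwards [hsymm μ hμ] with p hp
      by_cases h : p.1 = p.2
      · rw [h]
      · exact hp h
    have hNswap : ∀ p : X × X, ((p.2, p.1) ∈ N ↔ p ∈ N) := by
      intro p
      simp only [hNdef, Set.mem_setOf_eq]
      constructor
      · rintro ⟨h1, h2⟩; exact ⟨h1.symm, by rwa [h1] at h2⟩
      · rintro ⟨h1, h2⟩; exact ⟨h1.symm, by rwa [h1] at h2⟩
    have e3 : ∫⁻ p, G p ∂(ν.prod ν) = ∫⁻ p, G' p ∂(ν.prod ν) := by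
      calc ∫⁻ p, G p ∂(ν.prod ν)
          = ∫⁻ p, Nᶜ.indicator (fun q => f q.2 q.1 * g q.1 q.2) p ∂(ν.prod ν) := by
            refine lintegral_congr_ae ?_
            filter_upwards [hae] with p hp
            by_cases hpN : p ∈ Nᶜ
            · rw [hGdef]; rw [Set.indicator_of_mem hpN, Set.indicator_of_mem hpN, hp]
            · rw [hGdef]; rw [Set.indicator_of_notMem hpN, Set.indicator_of_notMem hpN]
        _ = ∫⁻ p, Nᶜ.indicator (fun q => f q.2 q.1 * g q.1 q.2) p.swap ∂(ν.prod ν) :=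
            (lintegral_prod_swap _).symm
        _ = ∫⁻ p, G' p ∂(ν.prod ν) := by
            refine lintegral_congr fun p => ?_
            rw [show p.swap = (p.2, p.1) from rfl]
            by_cases hpN : p ∈ Nᶜ
            · rw [hG'def, Set.indicator_of_mem
                (Set.mem_compl fun h => hpN ((hNswap p).mp h)), Set.indicator_of_mem hpN]
            · have hpmem : p ∈ N := not_not.mp hpN
              rw [hG'def, Set.indicator_of_notMem
                (Set.notMem_compl_iff.mpr ((hNswap p).mpr hpmem)),
                Set.indicator_of_notMem hpN]
    calc ∫⁻ y, (∫⁻ x, g x y ∂ π (μ + Measure.dirac y)) ∂ν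
        = ∫⁻ y, ((∫⁻ x, G (x, y) ∂ν) + ∫⁻ x in {y}, g x y ∂ π (μ + Measure.dirac y)) ∂ν :=
          lintegral_congr hL
      _ = (∫⁻ y, (∫⁻ x, G (x, y) ∂ν) ∂ν)
            + ∫⁻ y, (∫⁻ x in {y}, g x y ∂ π (μ + Measure.dirac y)) ∂ν :=
          lintegral_add_left hGm.lintegral_prod_left' _
      _ = (∫⁻ x, (∫⁻ t, G' (t, x) ∂ν) ∂ν)
            + ∫⁻ x, (∫⁻ t in {x}, g x t ∂ π (μ + Measure.dirac x)) ∂ν := by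
          rw [e1, e3, ← e2]
          congr 1
          exact lintegral_congr hdd
      _ = ∫⁻ x, ((∫⁻ t, G' (t, x) ∂ν) + ∫⁻ t in {x}, g x t ∂ π (μ + Measure.dirac x)) ∂ν :=
          (lintegral_add_left hG'm.lintegral_prod_left' _).symm
      _ = ∫⁻ x, (∫⁻ t, g x t ∂ π (μ + Measure.dirac x)) ∂ν := (lintegral_congr hR).symm
end

section
/- On the three-point space X = {−1, 0, 1}, the kernel π(μ,·) = ½[1−μ({−1})]δ_{−1} + ½δ_0 + ½[1+μ({1})]δ_1 satisfies Johnson's pointwise sufficiency postulate (J) — π(μ,{x}) depends only on x and μ({x}) — but fails the strong sufficiency postulate (J'): π(·, X) is not measurable with respect to σ(ζ_X), i.e. π(μ,X) is not a function of the total mass μ(X) alone. -/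
/-- The kernel on the three-point space X = {−1, 0, 1} (encoded as `Fin 3` with
0 ↦ −1, 1 ↦ 0, 2 ↦ 1): π(μ,·) = ½[1−μ({−1})]δ_{−1} + ½δ_0 + ½[1+μ({1})]δ_1,
given by its density with respect to counting measure. -/
noncomputable def counterKernel (μ : Fin 3 → ℕ) : Fin 3 → ℝ :=
  fun x =>
    if x = 0 then (1 - (μ 0 : ℝ)) / 2
    else if x = 1 then 1 / 2
    else (1 + (μ 2 : ℝ)) / 2

/-- the kernel satisfies Johnson's pointwise postulate (J) — π(μ,{x})
depends only on x and μ({x}) — but not the strong postulate (J'): π(μ,X) is not a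
function of the total mass μ(X) alone. -/
theorem counterexample_J_not_J' :
    (∀ (x : Fin 3) (μ₁ μ₂ : Fin 3 → ℕ), μ₁ x = μ₂ x →
      counterKernel μ₁ x = counterKernel μ₂ x) ∧
    ¬ (∀ μ₁ μ₂ : Fin 3 → ℕ,
        μ₁ 0 + μ₁ 1 + μ₁ 2 = μ₂ 0 + μ₂ 1 + μ₂ 2 →
        counterKernel μ₁ 0 + counterKernel μ₁ 1 + counterKernel μ₁ 2
          = counterKernel μ₂ 0 + counterKernel μ₂ 1 + counterKernel μ₂ 2) := by
  constructor
  · intro x μ₁ μ₂ h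
    fin_cases x <;> simp_all [counterKernel]
  · intro h
    have := h (fun x => if x = 0 then 1 else 0) (fun x => if x = 2 then 1 else 0) (by decide)
    simp only [counterKernel] at this
    norm_num [Fin.ext_iff] at this
end

section
/- If a Radon kernel π satisfies (A1) and (A2') with density f, then the fundamental recursion holds: π(μ+δ_y, ·) = f(·,y)·π(μ,·) + [π(μ+δ_y,{y}) − f(y,y)π(μ,{y})]·δ_y as measures on X, for all μ ∈ M··(X) and y ∈ X. -/
open MeasureTheory ENNReal NNReal Bornology

variable {X : Type*} [MetricSpace X] [MeasurableSpace X] [BorelSpace X]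

/-- Condition (A2): π(μ+δ_y, ·) = π(μ, ·) on {y}ᶜ. -/
def CondA2 (π : Measure X → Measure X) : Prop :=
  ∀ (y : X) (μ : Measure X), IsPointMeasure μ →
    (π (μ + Measure.dirac y)).restrict {y}ᶜ = (π μ).restrict {y}ᶜ

/-- the fundamental recursion with interaction density f:
π(μ+δ_y,·) = f(·,y)·π(μ,·) + [π(μ+δ_y,{y}) − f(y,y)π(μ,{y})]·δ_y, written additively. -/
theorem fundamental_recursion_with_density
    (π : Measure X → Measure X) (hπ : IsRadonKernel π)
    (f : X → X → ℝ≥0∞) (hf : Measurable (Function.uncurry f))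
    (hA1 : Cocycle π) (hA2' : CondA2' π f) :
    ∀ (μ : Measure X), IsPointMeasure μ → ∀ y : X,
      π (μ + Measure.dirac y) + (f y y * π μ {y}) • Measure.dirac y
        = (π μ).withDensity (fun x => f x y)
            + (π (μ + Measure.dirac y) {y}) • Measure.dirac y := by

  intro μ hμ y
  have hfy : Measurable (fun x => f x y) := hf.comp (measurable_id.prodMk measurable_const)
  ext s hs
  have h2 := hA2' y μ hμ
  have hdiff : ∀ ν : Measure X, ν (s \ {y}) = ν.restrict {y}ᶜ s := by
    intro ν
    rw [Measure.restrict_apply hs]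
    rfl
  have key : π (μ + Measure.dirac y) (s \ {y})
      = ((π μ).withDensity (fun x => f x y)) (s \ {y}) := by
    rw [hdiff, hdiff, h2]
  have hwds : ((π μ).withDensity (fun x => f x y)) {y} = f y y * π μ {y} := by
    rw [withDensity_apply _ (measurableSet_singleton y), lintegral_singleton]
  have hsplit : ∀ ν : Measure X, ν s = ν (s ∩ {y}) + ν (s \ {y}) := by
    intro ν
    rw [measure_inter_add_diff s (measurableSet_singleton y)]
  simp only [Measure.add_apply, Measure.smul_apply, smul_eq_mul]
  by_cases hy : y ∈ s
  · have hsy : s ∩ {y} = {y} := by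
      ext z; simp (config := {contextual := true}) [hy]
    rw [hsplit (π (μ + Measure.dirac y)), hsplit ((π μ).withDensity (fun x => f x y)),
      hsy, key, hwds, Measure.dirac_apply' _ hs, Set.indicator_of_mem hy]
    simp only [Pi.one_apply, mul_one]
    ring
  · have hsy : s ∩ {y} = ∅ := by
      ext z
      simp only [Set.mem_inter_iff, Set.mem_singleton_iff, Set.mem_empty_iff_false, iff_false,
        not_and]
      rintro hz rfl; exact hy hz
    rw [hsplit (π (μ + Measure.dirac y)), hsplit ((π μ).withDensity (fun x => f x y)),
      hsy, key, Measure.dirac_apply' _ hs, Set.indicator_of_notMem hy]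
    simp
end
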